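/- Let β ∈ (1,2) be the d-Bonacci number and T_B the balanced β-transformation on X_B = [(2-β)/(2β-2), β/(2β-2)). For x ∈ X_B let (t_1, t_2, t_3, ...) be its digit sequence, t_i = D_B(T_B^{i-1} x) ∈ {0,1}. Then x = ∑_{i≥1} t_i β^{-i}, and the digit sequence contains neither 0^{d+1} nor 1^{d+1} as a factor (i.e., no d+1 consecutive equal digits). -/

import Mathlib

/-- For `x ∈ X_B` with balanced digit sequence `t_i = D_B(T_B^{i-1} x) ∈ {0,1}`, one has
`x = ∑_{i≥1} t_i β^{-i}`, and the digit sequence contains no `d+1` consecutive equal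
digits (neither `0^{d+1}` nor `1^{d+1}` as a factor). -/
theorem balanced_expansion_digits (d : ℕ) (hd : 2 ≤ d) (β : ℝ) (h1 : 1 < β) (h2 : β < 2)
    (hβ : β ^ d = ∑ i ∈ Finset.range d, β ^ i)
    (TB : ℝ → ℝ) (hTB : ∀ x, TB x = if 1/(2*β - 2) ≤ x then β * x - 1 else β * x)
    (DB : ℝ → ℝ) (hDB : ∀ x, DB x = if 1/(2*β - 2) ≤ x then 1 else 0) :
    ∀ x ∈ Set.Ico ((2 - β)/(2*β - 2)) (β/(2*β - 2)),
      ∀ t : ℕ → ℝ, (∀ i : ℕ, 1 ≤ i → t i = DB (TB^[i-1] x)) →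
        (x = ∑' n : ℕ, t (n + 1) * (1/β) ^ (n + 1)) ∧
        (∀ i : ℕ, 1 ≤ i → ∃ j : ℕ, j ≤ d ∧ t (i + j) ≠ t i) := by
  intro x hx t ht
  have hβ0 : (0:ℝ) < β := by linarith
  have hβne : β ≠ 0 := ne_of_gt hβ0
  have h2b : (0:ℝ) < 2*β - 2 := by linarith
  set c : ℝ := 1/(2*β - 2) with hc
  set L : ℝ := (2-β)/(2*β - 2) with hL
  set U : ℝ := β/(2*β - 2) with hU
  -- key algebraic identity β^d * (2 - β) = 1
  have hkey : β^d * (2 - β) = 1 := by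
    have hgs : ∑ i ∈ Finset.range d, β ^ i = (β^d - 1)/(β - 1) := geom_sum_eq (ne_of_gt h1) d
    rw [hgs] at hβ
    have hb1 : β - 1 ≠ 0 := sub_ne_zero.mpr (ne_of_gt h1)
    field_simp at hβ
    nlinarith [hβ]
  have hβdpos : (0:ℝ) < β^d := pow_pos hβ0 d
  have hLc : β^d * L = c := by rw [hL, hc, mul_div_assoc', hkey]
  have hU1 : U - 1 = L := by
    rw [hU, hL, div_sub' (ne_of_gt h2b)]
    ring_nf
  have hTB' : ∀ y, TB y = β*y - DB y := by
    intro y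
    rw [hTB, hDB]
    split <;> ring
  -- invariance of the interval
  have hinv : ∀ y ∈ Set.Ico L U, TB y ∈ Set.Ico L U := by
    rintro y ⟨hy1, hy2⟩
    rw [hTB]
    rw [hU, lt_div_iff₀ h2b] at hy2
    split_ifs with h
    · rw [hc, div_le_iff₀ h2b] at h
      constructor
      · rw [hL, div_le_iff₀ h2b]; nlinarith
      · rw [hU, lt_div_iff₀ h2b]; nlinarith
    · push_neg at h
      rw [hc, lt_div_iff₀ h2b] at h
      have hL0 : (0:ℝ) < L := by rw [hL]; exact div_pos (by linarith) h2b
      constructor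
      · nlinarith
      · rw [hU, lt_div_iff₀ h2b]; nlinarith
  have hiter : ∀ n, TB^[n] x ∈ Set.Ico L U := by
    intro n
    induction n with
    | zero => exact hx
    | succ n ih => rw [Function.iterate_succ_apply']; exact hinv _ ih
  -- digits are 0 or 1
  have hd01 : ∀ i, 1 ≤ i → t i = 0 ∨ t i = 1 := by
    intro i hi
    rw [ht i hi, hDB]
    split
    · right; rfl
    · left; rfl
  -- partial sum identity
  have hps : ∀ n, x - ∑ k ∈ Finset.range n, t (k+1) * (1/β)^(k+1) = (1/β)^n * TB^[n] x := by
    intro n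
    induction n with
    | zero => simp
    | succ n ih =>
      rw [Finset.sum_range_succ, Function.iterate_succ_apply', hTB']
      have htn : t (n+1) = DB (TB^[n] x) := by
        have := ht (n+1) (by omega)
        simpa using this
      rw [← htn]
      have : x - (∑ k ∈ Finset.range n, t (k+1) * (1/β)^(k+1) + t (n+1) * (1/β)^(n+1))
          = (1/β)^n * TB^[n] x - t (n+1) * (1/β)^(n+1) := by linarith
      rw [this]
      have hb : (1/β) * β = 1 := one_div_mul_cancel hβne
      linear_combination (-(1/β)^n * TB^[n] x) * hb
  -- convergence of the remainder
  have hM : ∃ M : ℝ, 0 ≤ M ∧ ∀ n, |TB^[n] x| ≤ M := by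
    refine ⟨max |L| |U|, le_trans (abs_nonneg L) (le_max_left _ _), fun n => ?_⟩
    obtain ⟨ha, hb⟩ := hiter n
    rw [abs_le]
    constructor
    · calc -(max |L| |U|) ≤ -|L| := by simp [le_max_left]
        _ ≤ L := neg_abs_le L
        _ ≤ _ := ha
    · calc TB^[n] x ≤ U := le_of_lt hb
        _ ≤ |U| := le_abs_self U
        _ ≤ _ := le_max_right _ _
  obtain ⟨M, hM0, hMb⟩ := hM
  have hinvβ : |1/β| < 1 := by
    rw [abs_of_pos (by positivity)]
    rw [div_lt_one hβ0]; linarith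
  have hinvβ0 : (0:ℝ) ≤ 1/β := by positivity
  have hinvβ1 : 1/β < 1 := by rw [div_lt_one hβ0]; linarith
  have hrem : Filter.Tendsto (fun n => (1/β)^n * TB^[n] x) Filter.atTop (nhds 0) := by
    have hb : ∀ n : ℕ, ‖(1/β)^n * TB^[n] x‖ ≤ M * (1/β)^n := by
      intro n
      rw [norm_mul]
      calc ‖(1/β)^n‖ * ‖TB^[n] x‖ ≤ ‖(1/β)^n‖ * M := by
            apply mul_le_mul_of_nonneg_left _ (norm_nonneg _)
            exact hMb n
        _ = M * (1/β)^n := by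
            rw [Real.norm_eq_abs, abs_pow, abs_of_nonneg hinvβ0]; ring
    have ht0 : Filter.Tendsto (fun n : ℕ => M * (1/β)^n) Filter.atTop (nhds 0) := by
      simpa using (tendsto_pow_atTop_nhds_zero_of_lt_one hinvβ0 hinvβ1).const_mul M
    exact squeeze_zero_norm hb ht0
  have hpartial : Filter.Tendsto (fun n => ∑ k ∈ Finset.range n, t (k+1) * (1/β)^(k+1))
      Filter.atTop (nhds x) := by
    have : (fun n => ∑ k ∈ Finset.range n, t (k+1) * (1/β)^(k+1))
        = fun n => x - (1/β)^n * TB^[n] x := by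
      funext n
      have := hps n
      linarith
    rw [this]
    simpa using (tendsto_const_nhds (x := x)).sub hrem
  -- summability
  have hsummable : Summable (fun n : ℕ => t (n+1) * (1/β)^(n+1)) := by
    have hg : Summable (fun n : ℕ => (1/β) * (1/β)^n) :=
      (summable_geometric_of_lt_one hinvβ0 hinvβ1).mul_left _
    refine Summable.of_nonneg_of_le (fun n => ?_) (fun n => ?_) hg
    · rcases hd01 (n+1) (by omega) with h | h <;> rw [h] <;> positivity
    · rcases hd01 (n+1) (by omega) with h | h <;> rw [h]
      · rw [zero_mul]; positivity
      · rw [one_mul, pow_succ]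
        apply le_of_eq; ring
  have hx_eq : x = ∑' n : ℕ, t (n + 1) * (1/β) ^ (n + 1) := by
    have h2' := hsummable.hasSum.tendsto_sum_nat
    exact tendsto_nhds_unique hpartial h2'
  refine ⟨hx_eq, ?_⟩
  -- no d+1 consecutive equal digits
  intro i hi
  by_cases hall : ∀ j, j < d → t (i+j) = t i
  · refine ⟨d, le_rfl, ?_⟩
    set y := TB^[i-1] x with hy_def
    have hy : y ∈ Set.Ico L U := hiter (i-1)
    have hdig : ∀ j, t (i+j) = DB (TB^[j] y) := by
      intro j
      have hij : (i + j) - 1 = j + (i-1) := by omega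
      rw [ht (i+j) (by omega), hij, Function.iterate_add_apply]
    rcases hd01 i hi with h0 | h1
    · -- all digits 0 up to d-1, show t (i+d) = 1
      have hstep : ∀ j, j ≤ d → TB^[j] y = β^j * y := by
        intro j
        induction j with
        | zero => simp
        | succ n ih =>
          intro hn
          have hn' : n ≤ d := by omega
          have hdn : DB (TB^[n] y) = 0 := by
            rw [← hdig n, hall n (by omega), h0]
          rw [Function.iterate_succ_apply', hTB', hdn, ih hn']
          ring
      have hyd : c ≤ TB^[d] y := by
        rw [hstep d le_rfl, ← hLc]
        exact mul_le_mul_of_nonneg_left hy.1 (le_of_lt hβdpos)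
      have hTd : t (i+d) = 1 := by
        rw [hdig d, hDB, if_pos hyd]
      rw [hTd, h0]
      norm_num
    · -- all digits 1 up to d-1, show t (i+d) = 0
      have hstep : ∀ j, j ≤ d → TB^[j] y = β^j * y - ∑ k ∈ Finset.range j, β^k := by
        intro j
        induction j with
        | zero => simp
        | succ n ih =>
          intro hn
          have hn' : n ≤ d := by omega
          have hdn : DB (TB^[n] y) = 1 := by
            rw [← hdig n, hall n (by omega), h1]
          rw [Function.iterate_succ_apply', hTB', hdn, ih hn', geom_sum_succ]
          ring
      have hyd : TB^[d] y < c := by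
        rw [hstep d le_rfl, ← hβ, ← hLc, ← hU1]
        have := hy.2
        nlinarith [hβdpos]
      have hTd : t (i+d) = 0 := by
        rw [hdig d, hDB, if_neg (not_le.mpr hyd)]
      rw [hTd, h1]
      norm_num
  · push_neg at hall
    obtain ⟨j, hj, hne⟩ := hall
    exact ⟨j, le_of_lt hj, hne⟩
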